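/- In the Heisenberg group, the function u(x) = ((x1²+x2²)² + 16x3²)^(-1/2) satisfies Δ₂ u = X1X1u + X2X2u = 0 on ℝ³ \ {0}. -/

import Mathlib

noncomputable section

abbrev P3 : Type := ℝ × ℝ × ℝ

/-- Heisenberg vector field X1 = ∂/∂x1 - (x2/2) ∂/∂x3 (real-valued functions). -/
def X1r (u : P3 → ℝ) (p : P3) : ℝ :=
  fderiv ℝ u p (1, 0, 0) - p.2.1 / 2 * fderiv ℝ u p (0, 0, 1)

/-- Heisenberg vector field X2 = ∂/∂x2 + (x1/2) ∂/∂x3 (real-valued functions). -/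
def X2r (u : P3 → ℝ) (p : P3) : ℝ :=
  fderiv ℝ u p (0, 1, 0) + p.1 / 2 * fderiv ℝ u p (0, 0, 1)

namespace HeisAux

def rr (q : P3) : ℝ := (q.1 ^ 2 + q.2.1 ^ 2) ^ 2 + 16 * q.2.2 ^ 2

def c1 : P3 →L[ℝ] ℝ := ContinuousLinearMap.fst ℝ ℝ (ℝ × ℝ)
def c2 : P3 →L[ℝ] ℝ := (ContinuousLinearMap.fst ℝ ℝ ℝ).comp (ContinuousLinearMap.snd ℝ ℝ (ℝ × ℝ))
def c3 : P3 →L[ℝ] ℝ := (ContinuousLinearMap.snd ℝ ℝ ℝ).comp (ContinuousLinearMap.snd ℝ ℝ (ℝ × ℝ))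

@[simp] lemma c1_apply (v : P3) : c1 v = v.1 := rfl
@[simp] lemma c2_apply (v : P3) : c2 v = v.2.1 := rfl
@[simp] lemma c3_apply (v : P3) : c3 v = v.2.2 := rfl

def Dρ (q : P3) : P3 →L[ℝ] ℝ :=
  (4 * q.1 * (q.1 ^ 2 + q.2.1 ^ 2)) • c1 + (4 * q.2.1 * (q.1 ^ 2 + q.2.1 ^ 2)) • c2
    + (32 * q.2.2) • c3

lemma hx (q : P3) : HasFDerivAt (fun r : P3 => r.1) c1 q := hasFDerivAt_fst
lemma hy (q : P3) : HasFDerivAt (fun r : P3 => r.2.1) c2 q := hasFDerivAt_fst.comp q hasFDerivAt_snd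
lemma hz (q : P3) : HasFDerivAt (fun r : P3 => r.2.2) c3 q := hasFDerivAt_snd.comp q hasFDerivAt_snd

lemma hx2 (q : P3) : HasFDerivAt (fun r : P3 => r.1 ^ 2) ((2 * q.1) • c1) q := by
  simpa [Function.comp_def] using (hasDerivAt_pow 2 q.1).comp_hasFDerivAt q (hx q)
lemma hy2 (q : P3) : HasFDerivAt (fun r : P3 => r.2.1 ^ 2) ((2 * q.2.1) • c2) q := by
  simpa [Function.comp_def] using (hasDerivAt_pow 2 q.2.1).comp_hasFDerivAt q (hy q)
lemma hz2 (q : P3) : HasFDerivAt (fun r : P3 => r.2.2 ^ 2) ((2 * q.2.2) • c3) q := by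
  simpa [Function.comp_def] using (hasDerivAt_pow 2 q.2.2).comp_hasFDerivAt q (hz q)

lemma hrr (q : P3) : HasFDerivAt rr (Dρ q) q := by
  have hs : HasFDerivAt (fun r : P3 => r.1 ^ 2 + r.2.1 ^ 2)
      ((2 * q.1) • c1 + (2 * q.2.1) • c2) q := (hx2 q).add (hy2 q)
  have h := ((hasDerivAt_pow 2 (q.1 ^ 2 + q.2.1 ^ 2)).comp_hasFDerivAt q hs).add
    ((hz2 q).const_mul 16)
  refine h.congr_fderiv ?_
  refine ContinuousLinearMap.ext fun v => ?_
  simp [Dρ, smul_eq_mul]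
  ring

/-- the function u -/
def uu (q : P3) : ℝ := ((q.1 ^ 2 + q.2.1 ^ 2) ^ 2 + 16 * q.2.2 ^ 2) ^ (-(1 : ℝ) / 2)

lemma uu_eq : uu = fun q : P3 => rr q ^ (-(1 : ℝ) / 2) := rfl

def A (q : P3) : ℝ := 4 * q.1 * (q.1 ^ 2 + q.2.1 ^ 2) - 16 * q.2.1 * q.2.2
def B (q : P3) : ℝ := 4 * q.2.1 * (q.1 ^ 2 + q.2.1 ^ 2) + 16 * q.1 * q.2.2

def DA (q : P3) : P3 →L[ℝ] ℝ :=
  (4 * (q.1 ^ 2 + q.2.1 ^ 2) + 8 * q.1 ^ 2) • c1 + (8 * q.1 * q.2.1 - 16 * q.2.2) • c2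
    + (-16 * q.2.1) • c3

def DB (q : P3) : P3 →L[ℝ] ℝ :=
  (8 * q.1 * q.2.1 + 16 * q.2.2) • c1 + (4 * (q.1 ^ 2 + q.2.1 ^ 2) + 8 * q.2.1 ^ 2) • c2
    + (16 * q.1) • c3

lemma hA (q : P3) : HasFDerivAt A (DA q) q := by
  have h := (((hx q).const_mul 4).mul ((hx2 q).add (hy2 q))).sub
    (((hy q).const_mul 16).mul (hz q))
  refine h.congr_fderiv ?_
  refine ContinuousLinearMap.ext fun v => ?_
  simp [DA, smul_eq_mul]
  ring

lemma hB (q : P3) : HasFDerivAt B (DB q) q := by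
  have h := (((hy q).const_mul 4).mul ((hx2 q).add (hy2 q))).add
    (((hx q).const_mul 16).mul (hz q))
  refine h.congr_fderiv ?_
  refine ContinuousLinearMap.ext fun v => ?_
  simp [DB, smul_eq_mul]
  ring

lemma huu (q : P3) (h : 0 < rr q) :
    HasFDerivAt uu ((-(1 : ℝ) / 2 * rr q ^ (-(1 : ℝ) / 2 - 1)) • Dρ q) q := by
  rw [uu_eq]
  exact (Real.hasDerivAt_rpow_const (p := -(1 : ℝ) / 2) (Or.inl h.ne')).comp_hasFDerivAt q (hrr q)

def g1 (q : P3) : ℝ := -(1 : ℝ) / 2 * (rr q ^ (-(1 : ℝ) / 2 - 1) * A q)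
def g2 (q : P3) : ℝ := -(1 : ℝ) / 2 * (rr q ^ (-(1 : ℝ) / 2 - 1) * B q)

lemma X1r_uu_eq (q : P3) (h : 0 < rr q) : X1r uu q = g1 q := by
  rw [X1r, (huu q h).fderiv]
  simp [Dρ, g1, A, smul_eq_mul]
  ring

lemma X2r_uu_eq (q : P3) (h : 0 < rr q) : X2r uu q = g2 q := by
  rw [X2r, (huu q h).fderiv]
  simp [Dρ, g2, B, smul_eq_mul]
  ring

lemma hrpow (q : P3) (h : 0 < rr q) :
    HasFDerivAt (fun r : P3 => rr r ^ (-(1 : ℝ) / 2 - 1))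
      (((-(1 : ℝ) / 2 - 1) * rr q ^ (-(1 : ℝ) / 2 - 1 - 1)) • Dρ q) q :=
  (Real.hasDerivAt_rpow_const (p := -(1 : ℝ) / 2 - 1) (Or.inl h.ne')).comp_hasFDerivAt q (hrr q)

lemma hg1 (q : P3) (h : 0 < rr q) :
    HasFDerivAt g1 ((-(1 : ℝ) / 2) • (rr q ^ (-(1 : ℝ) / 2 - 1) • DA q
      + A q • (((-(1 : ℝ) / 2 - 1) * rr q ^ (-(1 : ℝ) / 2 - 1 - 1)) • Dρ q))) q :=
  ((hrpow q h).mul (hA q)).const_mul _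

lemma hg2 (q : P3) (h : 0 < rr q) :
    HasFDerivAt g2 ((-(1 : ℝ) / 2) • (rr q ^ (-(1 : ℝ) / 2 - 1) • DB q
      + B q • (((-(1 : ℝ) / 2 - 1) * rr q ^ (-(1 : ℝ) / 2 - 1 - 1)) • Dρ q))) q :=
  ((hrpow q h).mul (hB q)).const_mul _

lemma rr_pos (p : P3) (hp : p ≠ 0) : 0 < rr p := by
  have h : p.1 ≠ 0 ∨ p.2.1 ≠ 0 ∨ p.2.2 ≠ 0 := by
    by_contra hc
    push_neg at hc
    exact hp (by ext <;> simp [hc.1, hc.2.1, hc.2.2])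
  unfold rr
  rcases h with h | h | h
  · nlinarith [sq_nonneg p.2.1, sq_nonneg p.2.2, sq_nonneg (p.1 ^ 2 + p.2.1 ^ 2),
      pow_pos (abs_pos.mpr h) 2, sq_abs p.1]
  · nlinarith [sq_nonneg p.1, sq_nonneg p.2.2, pow_pos (abs_pos.mpr h) 2, sq_abs p.2.1]
  · nlinarith [sq_nonneg (p.1 ^ 2 + p.2.1 ^ 2), pow_pos (abs_pos.mpr h) 2, sq_abs p.2.2]

lemma rr_pos_open : IsOpen {q : P3 | 0 < rr q} := by
  have : Continuous rr := by unfold rr; fun_prop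
  exact isOpen_lt continuous_const this

end HeisAux

open HeisAux in
theorem heisenberg_2_harmonic (p : P3) (hp : p ≠ 0) :
    X1r (X1r fun r => ((r.1 ^ 2 + r.2.1 ^ 2) ^ 2 + 16 * r.2.2 ^ 2) ^ (-(1 : ℝ) / 2)) p +
      X2r (X2r fun r => ((r.1 ^ 2 + r.2.1 ^ 2) ^ 2 + 16 * r.2.2 ^ 2) ^ (-(1 : ℝ) / 2)) p = 0 := by
  have hpos := rr_pos p hp
  have hmem : {q : P3 | 0 < rr q} ∈ nhds p := rr_pos_open.mem_nhds hpos
  have h1 : X1r uu =ᶠ[nhds p] g1 := by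
    filter_upwards [hmem] with q hq using X1r_uu_eq q hq
  have h2 : X2r uu =ᶠ[nhds p] g2 := by
    filter_upwards [hmem] with q hq using X2r_uu_eq q hq
  have e1 : fderiv ℝ (X1r uu) p = fderiv ℝ g1 p := h1.fderiv_eq
  have e2 : fderiv ℝ (X2r uu) p = fderiv ℝ g2 p := h2.fderiv_eq
  show X1r (X1r uu) p + X2r (X2r uu) p = 0
  rw [X1r, X2r, e1, e2, (hg1 p hpos).fderiv, (hg2 p hpos).fderiv]
  have key : rr p ^ (-(1 : ℝ) / 2 - 1) = rr p ^ (-(1 : ℝ) / 2 - 1 - 1) * rr p := by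
    rw [← Real.rpow_add_one hpos.ne' (-(1 : ℝ) / 2 - 1 - 1)]
    norm_num
  simp only [Dρ, DA, DB, A, B, ContinuousLinearMap.add_apply, ContinuousLinearMap.smul_apply,
    c1_apply, c2_apply, c3_apply, smul_eq_mul]
  rw [key]
  unfold rr
  ring
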